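/- Let f be a λ-eigenfunction of F_q^n with λ = (q−1)n−qh. For each vertex α of weight h with support I = s(α), the Fourier coefficient of f at α satisfies f̂(α) = Σ_{β ∈ Γ^I} conj(ξ^{⟨α,β⟩}) · η(α,β), where η(α,β) = Σ_{γ ∈ Γ^{Ī}(β)} f(γ) is the sum of f over the orthogonal face through β. Consequently, f is uniquely determined by its values on the ball B_h of radius h around 0. -/

import Mathlib

/-- Hamming weight. -/
def wt {q n : ℕ} [NeZero q] (α : Fin n → ZMod q) : ℕ :=
  (Finset.univ.filter (fun j => α j ≠ 0)).card

open Finset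

namespace S14

variable {q : ℕ} [NeZero q] {ξ : ℂ}

lemma psi_add (hp : IsPrimitiveRoot ξ q) (a b : ZMod q) :
    ξ ^ (a + b).val = ξ ^ a.val * ξ ^ b.val := by
  rw [ZMod.val_add, ← pow_add]
  conv_rhs => rw [← Nat.mod_add_div (a.val + b.val) q]
  rw [pow_add, pow_mul, hp.pow_eq_one, one_pow, mul_one]

lemma psi_sum (hp : IsPrimitiveRoot ξ q) {ι : Type*} (s : Finset ι) (t : ι → ZMod q) :
    ξ ^ (∑ j ∈ s, t j).val = ∏ j ∈ s, ξ ^ (t j).val := by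
  induction s using Finset.cons_induction with
  | empty => simp
  | cons j s hj ih => rw [Finset.sum_cons, Finset.prod_cons, psi_add hp, ih]

lemma sum_psi (hp : IsPrimitiveRoot ξ q) (a : ZMod q) :
    ∑ c : ZMod q, ξ ^ (a * c).val = if a = 0 then (q : ℂ) else 0 := by
  split_ifs with ha
  · simp [ha, Finset.card_univ, ZMod.card]
  · have key : (∑ c : ZMod q, ξ ^ (a * c).val) = ξ ^ a.val * ∑ c : ZMod q, ξ ^ (a * c).val := by
      calc (∑ c : ZMod q, ξ ^ (a * c).val) = ∑ c : ZMod q, ξ ^ (a * (c + 1)).val :=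
            Fintype.sum_equiv (Equiv.subRight (1 : ZMod q)) _ _
              (fun c => by rw [Equiv.subRight_apply, sub_add_cancel])
        _ = ξ ^ a.val * ∑ c : ZMod q, ξ ^ (a * c).val := by
            rw [Finset.mul_sum]
            refine Finset.sum_congr rfl fun c _ => ?_
            rw [mul_add, mul_one, psi_add hp, mul_comm]
    have hne : ξ ^ a.val ≠ 1 :=
      hp.pow_ne_one_of_pos_of_lt (ZMod.val_pos.2 ha).ne' (ZMod.val_lt a)
    have h2 : (ξ ^ a.val - 1) * ∑ c : ZMod q, ξ ^ (a * c).val = 0 := by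
      rw [sub_mul, one_mul, ← key, sub_self]
    rcases mul_eq_zero.1 h2 with h | h
    · exact absurd (sub_eq_zero.1 h) hne
    · exact h


lemma sum_psi' (hp : IsPrimitiveRoot ξ q) (a : ZMod q) :
    ∑ c : ZMod q, ξ ^ (c * a).val = if a = 0 then (q : ℂ) else 0 := by
  rw [← sum_psi hp a]
  exact Finset.sum_congr rfl fun c _ => by rw [mul_comm]

lemma orth (hp : IsPrimitiveRoot ξ q) {n : ℕ} (z : Fin n → ZMod q) :
    ∑ a : Fin n → ZMod q, ∏ j, ξ ^ ((a j * z j).val) = if z = 0 then ((q : ℂ)) ^ n else 0 := by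
  rw [← Fintype.piFinset_univ,
    ← Finset.prod_univ_sum (fun _ => (Finset.univ : Finset (ZMod q)))
      (fun j c => ξ ^ ((c * z j).val))]
  split_ifs with hz
  · subst hz
    simp only [Pi.zero_apply, mul_zero, ZMod.val_zero, pow_zero]
    rw [Finset.prod_const, Finset.sum_const, Finset.card_univ, ZMod.card]
    simp
  · obtain ⟨j, hj⟩ : ∃ j, z j ≠ 0 := by
      by_contra hc; push_neg at hc; exact hz (funext hc)
    refine Finset.prod_eq_zero (Finset.mem_univ j) ?_
    rw [sum_psi' hp (z j), if_neg hj]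

lemma inner_update {n : ℕ} (a γ : Fin n → ZMod q) (j : Fin n) (c : ZMod q) :
    (∑ i, a i * Function.update γ j (γ j + c) i) = (∑ i, a i * γ i) + a j * c := by
  have h1 : (fun i => a i * Function.update γ j (γ j + c) i)
      = Function.update (fun i => a i * γ i) j (a j * γ j + a j * c) := by
    funext i
    rcases eq_or_ne i j with rfl | hij
    · simp [mul_add]
    · simp [Function.update_apply, hij]
  calc (∑ i, a i * Function.update γ j (γ j + c) i)
      = ∑ i, Function.update (fun i => a i * γ i) j (a j * γ j + a j * c) i := by rw [h1]
    _ = (a j * γ j + a j * c) + ∑ i ∈ Finset.univ \ {j}, a i * γ i :=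
        Finset.sum_update_of_mem (Finset.mem_univ j) _ _
    _ = (∑ i, a i * γ i) + a j * c := by
        rw [Finset.sum_eq_sum_sdiff_singleton_add (Finset.mem_univ j) (fun i => a i * γ i)]
        ring

lemma sum_sphere {n : ℕ} (γ : Fin n → ZMod q) (F : (Fin n → ZMod q) → ℂ) :
    ∑ β ∈ Finset.univ.filter (fun β => hammingDist γ β = 1), F β
      = ∑ p ∈ (Finset.univ : Finset (Fin n)) ×ˢ Finset.univ.filter (fun c : ZMod q => c ≠ 0),
          F (Function.update γ p.1 (γ p.1 + p.2)) := by
  refine (Finset.sum_bij (fun p _ => Function.update γ p.1 (γ p.1 + p.2)) ?_ ?_ ?_ ?_).symm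
  · rintro ⟨j, c⟩ hp
    have hc : c ≠ 0 := by simpa using (Finset.mem_product.1 hp).2
    have hset : (Finset.univ.filter fun i => γ i ≠ Function.update γ j (γ j + c) i) = {j} := by
      ext i
      simp only [Finset.mem_filter, Finset.mem_univ, true_and, Finset.mem_singleton,
        Function.update_apply]
      rcases eq_or_ne i j with rfl | hij
      · simp [hc, left_eq_add]
      · simp [hij]
    simp only [Finset.mem_filter, Finset.mem_univ, true_and, hammingDist]
    rw [hset]
    simp
  · rintro ⟨j, c⟩ hp ⟨j', c'⟩ hp' heq
    have hc : c ≠ 0 := by simpa using (Finset.mem_product.1 hp).2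
    have hjj : j = j' := by
      by_contra hne
      have h1 := congrFun heq j
      dsimp only at h1
      rw [Function.update_self, Function.update_of_ne hne] at h1
      exact hc (by linear_combination h1)
    subst hjj
    have h1 := congrFun heq j
    dsimp only at h1
    rw [Function.update_self, Function.update_self] at h1
    simp [add_left_cancel h1]
  · intro β hβ
    simp only [Finset.mem_filter, Finset.mem_univ, true_and, hammingDist] at hβ
    obtain ⟨j, hj⟩ := Finset.card_eq_one.1 hβ
    have hjmem : γ j ≠ β j := by
      have : j ∈ ({j} : Finset (Fin n)) := Finset.mem_singleton_self j
      rw [← hj] at this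
      simpa using this
    have hother : ∀ i, i ≠ j → γ i = β i := by
      intro i hij
      by_contra hne
      have : i ∈ ({j} : Finset (Fin n)) := by
        rw [← hj]; simp [hne]
      exact hij (Finset.mem_singleton.1 this)
    refine ⟨⟨j, β j - γ j⟩, ?_, ?_⟩
    · simp [sub_ne_zero.2 (Ne.symm hjmem)]
    · funext i
      rcases eq_or_ne i j with rfl | hij
      · simp
      · simp [Function.update_apply, hij, hother i hij]
  · intros; rfl


lemma sphere_char (hp : IsPrimitiveRoot ξ q) {n : ℕ} (a γ : Fin n → ZMod q) :
    ∑ β ∈ Finset.univ.filter (fun β => hammingDist γ β = 1),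
        ξ ^ ((∑ j, a j * β j : ZMod q)).val
      = (((q : ℂ) - 1) * n - q * ((Finset.univ.filter (fun j => a j ≠ 0)).card : ℂ))
        * ξ ^ ((∑ j, a j * γ j : ZMod q)).val := by
  rw [sum_sphere, Finset.sum_product]
  have hterm : ∀ (j : Fin n) (c : ZMod q),
      ξ ^ ((∑ i, a i * Function.update γ j (γ j + c) i : ZMod q)).val
        = ξ ^ ((∑ i, a i * γ i : ZMod q)).val * ξ ^ ((a j * c : ZMod q)).val := by
    intro j c; rw [inner_update, psi_add hp]
  simp_rw [hterm, ← Finset.mul_sum]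
  rw [mul_comm]
  congr 1
  have hrow : ∀ j : Fin n,
      ∑ c ∈ Finset.univ.filter (fun c : ZMod q => c ≠ 0), ξ ^ ((a j * c : ZMod q)).val
        = (if a j = 0 then (q : ℂ) else 0) - 1 := by
    intro j
    rw [Finset.filter_ne', Finset.sum_erase_eq_sub (Finset.mem_univ 0), sum_psi hp]
    simp
  simp_rw [hrow]
  rw [Finset.sum_sub_distrib, Finset.sum_const, Finset.card_univ, Fintype.card_fin,
    Finset.sum_ite, Finset.sum_const, Finset.sum_const_zero, add_zero, nsmul_eq_mul,
    nsmul_eq_mul, mul_one]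
  have hc1 : (Finset.univ.filter fun j : Fin n => a j = 0).card
      = n - (Finset.univ.filter fun j : Fin n => a j ≠ 0).card := by
    have := Finset.card_filter_add_card_filter_not
      (s := (Finset.univ : Finset (Fin n))) (p := fun j => a j ≠ 0)
    simp only [Finset.card_univ, Fintype.card_fin, not_not] at this
    omega
  have hle : (Finset.univ.filter fun j : Fin n => a j ≠ 0).card ≤ n := by
    have := Finset.card_filter_le (Finset.univ : Finset (Fin n)) (fun j => a j ≠ 0)
    simpa using this
  rw [hc1]
  push_cast [Nat.cast_sub hle]
  ring

lemma vanish_all (hp : IsPrimitiveRoot ξ q) {n h : ℕ}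
    (d : (Fin n → ZMod q) → ℂ)
    (hd : ∀ α, ∑ β ∈ Finset.univ.filter (fun β => hammingDist α β = 1), d β
            = (((q : ℂ) - 1) * n - q * h) * d α)
    (h0 : ∀ x : Fin n → ZMod q, (Finset.univ.filter fun j => x j ≠ 0).card ≤ h → d x = 0) :
    ∀ y, d y = 0 := by
  classical
  have hq0 : (q : ℂ) ≠ 0 := Nat.cast_ne_zero.2 (NeZero.ne q)
  -- the "Fourier transform" (with ψ instead of conj ψ)
  set T : (Fin n → ZMod q) → ℂ :=
    fun a => ∑ x, d x * ξ ^ ((∑ j, a j * x j : ZMod q)).val with hT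
  have stepA : ∀ a : Fin n → ZMod q,
      (Finset.univ.filter fun j => a j ≠ 0).card ≠ h → T a = 0 := by
    intro a hne
    set w : ℕ := (Finset.univ.filter fun j => a j ≠ 0).card with hw
    have calc1 : ∑ x, d x * (∑ β ∈ Finset.univ.filter (fun β => hammingDist x β = 1),
        ξ ^ ((∑ j, a j * β j : ZMod q)).val)
          = (((q : ℂ) - 1) * n - q * w) * T a := by
      simp_rw [sphere_char hp]
      rw [hT, Finset.mul_sum]
      exact Finset.sum_congr rfl fun x _ => by ring
    have calc2 : ∑ x, d x * (∑ β ∈ Finset.univ.filter (fun β => hammingDist x β = 1),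
        ξ ^ ((∑ j, a j * β j : ZMod q)).val)
          = (((q : ℂ) - 1) * n - q * h) * T a := by
      calc ∑ x, d x * (∑ β ∈ Finset.univ.filter (fun β => hammingDist x β = 1),
              ξ ^ ((∑ j, a j * β j : ZMod q)).val)
          = ∑ x : Fin n → ZMod q, ∑ β : Fin n → ZMod q,
              (if hammingDist β x = 1 then d x * ξ ^ ((∑ j, a j * β j : ZMod q)).val else 0) := by
            refine Finset.sum_congr rfl fun x _ => ?_
            rw [Finset.mul_sum, Finset.sum_filter]
            refine Finset.sum_congr rfl fun β _ => ?_
            rw [hammingDist_comm]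
        _ = ∑ β : Fin n → ZMod q, ∑ x : Fin n → ZMod q,
              (if hammingDist β x = 1 then d x * ξ ^ ((∑ j, a j * β j : ZMod q)).val else 0) :=
            Finset.sum_comm
        _ = ∑ β : Fin n → ZMod q, ξ ^ ((∑ j, a j * β j : ZMod q)).val *
              ∑ x ∈ Finset.univ.filter (fun x => hammingDist β x = 1), d x := by
            refine Finset.sum_congr rfl fun β _ => ?_
            rw [Finset.mul_sum, Finset.sum_filter]
            refine Finset.sum_congr rfl fun x _ => ?_
            split_ifs <;> ring
        _ = (((q : ℂ) - 1) * n - q * h) * T a := by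
            rw [hT, Finset.mul_sum]
            refine Finset.sum_congr rfl fun β _ => ?_
            rw [hd β]; ring
    have hfac : ((((q : ℂ) - 1) * n - q * w) - (((q : ℂ) - 1) * n - q * h)) * T a = 0 := by
      rw [sub_mul, calc1.symm.trans calc2, sub_self]
    have hne2 : (((q : ℂ) - 1) * n - q * w) - (((q : ℂ) - 1) * n - q * h) ≠ 0 := by
      have : ((((q : ℂ) - 1) * n - q * w) - (((q : ℂ) - 1) * n - q * h)) = q * ((h : ℂ) - w) := by
        ring
      rw [this]
      exact mul_ne_zero hq0 (sub_ne_zero.2 fun e => hne (by exact_mod_cast e.symm))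
    exact (mul_eq_zero.1 hfac).resolve_left hne2
  have stepB : ∀ a : Fin n → ZMod q,
      (Finset.univ.filter fun j => a j ≠ 0).card = h → T a = 0 := by
    intro a ha
    set t' : Fin n → Finset (ZMod q) :=
      fun j => if a j ≠ 0 then ({a j} : Finset (ZMod q)) else Finset.univ with ht'
    have hsum0 : ∑ a' ∈ Fintype.piFinset t', T a' = 0 := by
      rw [hT]
      rw [Finset.sum_comm]
      refine Finset.sum_eq_zero fun x _ => ?_
      have : ∑ a' ∈ Fintype.piFinset t', d x * ξ ^ ((∑ j, a' j * x j : ZMod q)).val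
          = d x * ∏ j, ∑ c ∈ t' j, ξ ^ ((c * x j : ZMod q)).val := by
        rw [Finset.prod_univ_sum t' (fun j c => ξ ^ ((c * x j : ZMod q)).val), Finset.mul_sum]
        exact Finset.sum_congr rfl fun a' _ => by rw [psi_sum hp]
      rw [this]
      by_cases hx : ∀ j, a j = 0 → x j = 0
      · refine mul_eq_zero_of_left (h0 x ?_) _
        rw [← ha]
        refine Finset.card_le_card fun j hj => ?_
        simp only [Finset.mem_filter, Finset.mem_univ, true_and] at hj ⊢
        intro haj
        exact hj (hx j haj)
      · push_neg at hx
        obtain ⟨j, haj, hxj⟩ := hx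
        refine mul_eq_zero_of_right _ (Finset.prod_eq_zero (Finset.mem_univ j) ?_)
        have : t' j = Finset.univ := by rw [ht']; simp [haj]
        rw [this, sum_psi' hp, if_neg hxj]
    have hmem : a ∈ Fintype.piFinset t' := by
      rw [Fintype.mem_piFinset]
      intro j
      rw [ht']
      dsimp only
      split_ifs <;> simp
    have hsingle : ∑ a' ∈ Fintype.piFinset t', T a' = T a := by
      refine Finset.sum_eq_single_of_mem a hmem fun b hb hne => ?_
      refine stepA b ?_
      have hbj : ∀ j, a j ≠ 0 → b j = a j := by
        intro j hj
        have := (Fintype.mem_piFinset.1 hb) j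
        rw [ht'] at this
        dsimp only at this
        rw [if_pos hj] at this
        exact Finset.mem_singleton.1 this
      obtain ⟨j₀, hj₀⟩ := Function.ne_iff.1 hne
      have haj₀ : a j₀ = 0 := by
        by_contra hc
        exact hj₀ (hbj j₀ hc)
      have hbj₀ : b j₀ ≠ 0 := by rwa [haj₀] at hj₀
      have hsub : (Finset.univ.filter fun j => a j ≠ 0)
          ⊆ (Finset.univ.filter fun j => b j ≠ 0) := by
        intro j hj
        simp only [Finset.mem_filter, Finset.mem_univ, true_and] at hj ⊢
        rw [hbj j hj]; exact hj
      have hlt : (Finset.univ.filter fun j => a j ≠ 0).card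
          < (Finset.univ.filter fun j => b j ≠ 0).card := by
        refine Finset.card_lt_card ⟨hsub, fun hcon => ?_⟩
        have : j₀ ∈ (Finset.univ.filter fun j => b j ≠ 0) := by
          simp [hbj₀]
        have := hcon this
        simp only [Finset.mem_filter, Finset.mem_univ, true_and] at this
        exact this haj₀
      omega
    exact hsingle.symm.trans hsum0
  have vanish : ∀ a, T a = 0 := by
    intro a
    by_cases hcase : (Finset.univ.filter fun j => a j ≠ 0).card = h
    · exact stepB a hcase
    · exact stepA a hcase
  intro y
  have hzero : ∑ aa : Fin n → ZMod q,
      T aa * ∏ j, ξ ^ ((aa j * (-(y j)) : ZMod q)).val = 0 :=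
    Finset.sum_eq_zero fun aa _ => by rw [vanish aa, zero_mul]
  have hcomp : ∑ aa : Fin n → ZMod q,
      T aa * ∏ j, ξ ^ ((aa j * (-(y j)) : ZMod q)).val = (q : ℂ) ^ n * d y := by
    calc ∑ aa : Fin n → ZMod q, T aa * ∏ j, ξ ^ ((aa j * (-(y j)) : ZMod q)).val
        = ∑ aa : Fin n → ZMod q, ∑ x : Fin n → ZMod q,
            d x * ∏ j, ξ ^ ((aa j * (x j - y j) : ZMod q)).val := by
          refine Finset.sum_congr rfl fun aa _ => ?_
          rw [hT]
          dsimp only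
          rw [Finset.sum_mul]
          refine Finset.sum_congr rfl fun x _ => ?_
          rw [psi_sum hp, mul_assoc, ← Finset.prod_mul_distrib]
          congr 1
          refine Finset.prod_congr rfl fun j _ => ?_
          rw [← psi_add hp]
          congr 1
          ring
      _ = ∑ x : Fin n → ZMod q, d x * ∑ aa : Fin n → ZMod q,
            ∏ j, ξ ^ ((aa j * (x j - y j) : ZMod q)).val := by
          rw [Finset.sum_comm]
          exact Finset.sum_congr rfl fun x _ => by rw [Finset.mul_sum]
      _ = ∑ x : Fin n → ZMod q, d x * (if (x - y : Fin n → ZMod q) = 0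
            then ((q : ℂ)) ^ n else 0) := by
          refine Finset.sum_congr rfl fun x _ => ?_
          rw [← orth hp (x - y)]
          rfl
      _ = (q : ℂ) ^ n * d y := by
          simp_rw [sub_eq_zero, mul_ite, mul_zero]
          rw [Finset.sum_ite_eq' Finset.univ y (fun x => d x * (q : ℂ) ^ n)]
          simp [mul_comm]
  have := hcomp ▸ hzero
  have hqn : ((q : ℂ)) ^ n ≠ 0 := pow_ne_zero _ hq0
  exact (mul_eq_zero.1 this).resolve_left hqn

end S14

/-- For a λ-eigenfunction f and a vertex α of weight h with support I, the Fourier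
coefficient f̂(α) equals Σ_{β ∈ Γ^I} conj(ξ^⟨α,β⟩)·η(α,β), where η(α,β) is the sum
of f over the orthogonal face Γ^{Ī}(β); consequently f is uniquely determined by
its values on the ball of radius h around 0. -/
theorem stmt14 (q n h : ℕ) [NeZero q] (hq : 2 ≤ q) (hh : h ≤ n)
    (ξ : ℂ) (hξ : ξ = Complex.exp (2 * Real.pi * Complex.I / q))
    (f : (Fin n → ZMod q) → ℂ)
    (hf : ∀ α, ∑ β ∈ Finset.univ.filter (fun β => hammingDist α β = 1), f β
            = (((q:ℂ)-1)*n - q*h) * f α) :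
    (∀ α : Fin n → ZMod q, wt α = h →
      ∑ β : Fin n → ZMod q, f β * (starRingEnd ℂ) (ξ ^ ((∑ j, α j * β j : ZMod q)).val)
        = ∑ β ∈ Finset.univ.filter
            (fun β : Fin n → ZMod q =>
              ∀ j ∈ (Finset.univ.filter (fun j => α j ≠ 0))ᶜ, β j = 0),
            (starRingEnd ℂ) (ξ ^ ((∑ j, α j * β j : ZMod q)).val) *
              ∑ γ ∈ Finset.univ.filter
                (fun γ : Fin n → ZMod q =>
                  ∀ j ∈ Finset.univ.filter (fun j => α j ≠ 0), γ j = β j), f γ) ∧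
    (∀ g : (Fin n → ZMod q) → ℂ,
      (∀ α, ∑ β ∈ Finset.univ.filter (fun β => hammingDist α β = 1), g β
          = (((q:ℂ)-1)*n - q*h) * g α) →
      (∀ β, wt β ≤ h → f β = g β) → f = g) := by
  classical
  have hp : IsPrimitiveRoot ξ q := by
    rw [hξ]; exact Complex.isPrimitiveRoot_exp q (NeZero.ne q)
  constructor
  · intro α _
    have hmap : ∀ β : Fin n → ZMod q, (fun j => if α j ≠ 0 then β j else 0) ∈
        Finset.univ.filter (fun β : Fin n → ZMod q =>
          ∀ j ∈ (Finset.univ.filter (fun j => α j ≠ 0))ᶜ, β j = 0) := by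
      intro β
      simp only [Finset.mem_filter, Finset.mem_univ, true_and]
      intro j hj
      simp only [Finset.mem_compl, Finset.mem_filter, Finset.mem_univ, true_and,
        not_not] at hj
      simp [hj]
    refine Eq.trans (Finset.sum_fiberwise_of_maps_to
        (fun β (_ : β ∈ Finset.univ) => hmap β)
        (fun β : Fin n → ZMod q =>
          f β * (starRingEnd ℂ) (ξ ^ ((∑ j, α j * β j : ZMod q)).val))).symm ?_
    refine Finset.sum_congr rfl fun β hβ => ?_
    simp only [Finset.mem_filter, Finset.mem_univ, true_and] at hβ
    have hβ' : ∀ j, α j = 0 → β j = 0 := by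
      intro j hj
      refine hβ j ?_
      simp [hj]
    have hfib : Finset.univ.filter
        (fun γ : Fin n → ZMod q => (fun j => if α j ≠ 0 then γ j else 0) = β)
        = Finset.univ.filter (fun γ : Fin n → ZMod q =>
            ∀ j ∈ Finset.univ.filter (fun j => α j ≠ 0), γ j = β j) := by
      ext γ
      simp only [Finset.mem_filter, Finset.mem_univ, true_and, funext_iff]
      constructor
      · intro hg j hj
        have hj' : α j ≠ 0 := by simpa using hj
        have := hg j
        rwa [if_pos hj'] at this
      · intro hg j
        by_cases hj : α j ≠ 0
        · rw [if_pos hj]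
          refine hg j ?_
          simpa using hj
        · rw [if_neg hj]
          rw [not_not] at hj
          exact (hβ' j hj).symm
    rw [hfib, Finset.mul_sum]
    refine Finset.sum_congr rfl fun γ hγ => ?_
    simp only [Finset.mem_filter, Finset.mem_univ, true_and] at hγ
    have hip : (∑ j, α j * γ j : ZMod q) = ∑ j, α j * β j := by
      refine Finset.sum_congr rfl fun j _ => ?_
      by_cases hj : α j = 0
      · rw [hj, zero_mul, zero_mul]
      · rw [hγ j (by simp [hj])]
    rw [hip, mul_comm]
  · intro g hg hagree
    have hd : ∀ α, ∑ β ∈ Finset.univ.filter (fun β => hammingDist α β = 1),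
        (f β - g β) = (((q:ℂ)-1)*n - q*h) * (f α - g α) := by
      intro α
      rw [Finset.sum_sub_distrib, hf α, hg α]
      ring
    have h0 : ∀ x : Fin n → ZMod q,
        (Finset.univ.filter fun j => x j ≠ 0).card ≤ h → f x - g x = 0 :=
      fun x hx => sub_eq_zero.2 (hagree x hx)
    have hvan := S14.vanish_all (h := h) hp (fun x => f x - g x) hd h0
    funext x
    exact sub_eq_zero.1 (hvan x)
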